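/- Let I₁, I₂ be open intervals and g₁, h₁ : I₁ → ℝ, g₂, h₂ : I₂ → ℝ differentiable functions such that for all (t₁, t₂) ∈ I₁ × I₂: g₁(t₁) ≠ g₂(t₂), h₁(t₁) ≠ h₂(t₂), and suppose at a point (t₁, t₂) the products g₁'(t₁)·g₂'(t₂) and h₁'(t₁)·h₂'(t₂) are both nonzero and have the same sign η ∈ {1, −1}. Define, at (t₁, t₂): K = (8·√(|g₁'h₁'g₂'h₂'|)/|(g₁ − g₂)(h₁ − h₂)|)·(g₁'g₂'/(g₁ − g₂)² + h₁'h₂'/(h₁ − h₂)²), κ = (8·√(|g₁'h₁'g₂'h₂'|)/|(g₁ − g₂)(h₁ − h₂)|)·(g₁'g₂'/(g₁ − g₂)² − h₁'h₂'/(h₁ − h₂)²), A = 4·|g₁'g₂'|/(g₁ − g₂)², B = 4·|h₁'h₂'|/(h₁ − h₂)². Then K = η·√(A·B)·(A + B)/2 and κ = η·√(A·B)·(A − B)/2; in particular the sign of K equals η. -/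

import Mathlib

noncomputable section

/-- For a minimal Lorentz surface of first or second type in ℝ⁴₂ (canonical Weierstrass
data g₁,h₁,g₂,h₂ with g₁'g₂' and h₁'h₂' nonzero of the same sign η), the Gauss curvature
K and normal curvature κ are expressed through A = √|K_g| and B = √|K_h| as
K = η√(AB)(A+B)/2 and κ = η√(AB)(A−B)/2; in particular sign K = η. -/
theorem stmt_18 (I₁ I₂ : Set ℝ) (hI₁ : IsOpen I₁) (hI₂ : IsOpen I₂)
    (g₁ h₁ g₂ h₂ : ℝ → ℝ)
    (hg₁ : DifferentiableOn ℝ g₁ I₁) (hh₁ : DifferentiableOn ℝ h₁ I₁)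
    (hg₂ : DifferentiableOn ℝ g₂ I₂) (hh₂ : DifferentiableOn ℝ h₂ I₂)
    (hgg : ∀ t₁ ∈ I₁, ∀ t₂ ∈ I₂, g₁ t₁ ≠ g₂ t₂)
    (hhh : ∀ t₁ ∈ I₁, ∀ t₂ ∈ I₂, h₁ t₁ ≠ h₂ t₂)
    (t₁ t₂ : ℝ) (ht₁ : t₁ ∈ I₁) (ht₂ : t₂ ∈ I₂)
    (hg' : deriv g₁ t₁ * deriv g₂ t₂ ≠ 0)
    (hh' : deriv h₁ t₁ * deriv h₂ t₂ ≠ 0)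
    (η : ℝ) (hη : η = 1 ∨ η = -1)
    (hsg : Real.sign (deriv g₁ t₁ * deriv g₂ t₂) = η)
    (hsh : Real.sign (deriv h₁ t₁ * deriv h₂ t₂) = η)
    (K κ A B : ℝ)
    (hK : K = 8 * Real.sqrt |deriv g₁ t₁ * deriv h₁ t₁ * deriv g₂ t₂ * deriv h₂ t₂| /
        |(g₁ t₁ - g₂ t₂) * (h₁ t₁ - h₂ t₂)| *
        (deriv g₁ t₁ * deriv g₂ t₂ / (g₁ t₁ - g₂ t₂) ^ 2 +
         deriv h₁ t₁ * deriv h₂ t₂ / (h₁ t₁ - h₂ t₂) ^ 2))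
    (hκ : κ = 8 * Real.sqrt |deriv g₁ t₁ * deriv h₁ t₁ * deriv g₂ t₂ * deriv h₂ t₂| /
        |(g₁ t₁ - g₂ t₂) * (h₁ t₁ - h₂ t₂)| *
        (deriv g₁ t₁ * deriv g₂ t₂ / (g₁ t₁ - g₂ t₂) ^ 2 -
         deriv h₁ t₁ * deriv h₂ t₂ / (h₁ t₁ - h₂ t₂) ^ 2))
    (hA : A = 4 * |deriv g₁ t₁ * deriv g₂ t₂| / (g₁ t₁ - g₂ t₂) ^ 2)
    (hB : B = 4 * |deriv h₁ t₁ * deriv h₂ t₂| / (h₁ t₁ - h₂ t₂) ^ 2) :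
    K = η * Real.sqrt (A * B) * (A + B) / 2 ∧
    κ = η * Real.sqrt (A * B) * (A - B) / 2 ∧
    Real.sign K = η := by
  have hdg : g₁ t₁ - g₂ t₂ ≠ 0 := sub_ne_zero.2 (hgg t₁ ht₁ t₂ ht₂)
  have hdh : h₁ t₁ - h₂ t₂ ≠ 0 := sub_ne_zero.2 (hhh t₁ ht₁ t₂ ht₂)
  set a := deriv g₁ t₁ * deriv g₂ t₂ with ha_def
  set b := deriv h₁ t₁ * deriv h₂ t₂ with hb_def
  have hab : deriv g₁ t₁ * deriv h₁ t₁ * deriv g₂ t₂ * deriv h₂ t₂ = a * b := by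
    rw [ha_def, hb_def]; ring
  have hηa : η * |a| = a := by
    rcases lt_or_gt_of_ne hg' with h | h
    · rw [Real.sign_of_neg h] at hsg; rw [← hsg, abs_of_neg h]; ring
    · rw [Real.sign_of_pos h] at hsg; rw [← hsg, abs_of_pos h]; ring
  have hηb : η * |b| = b := by
    rcases lt_or_gt_of_ne hh' with h | h
    · rw [Real.sign_of_neg h] at hsh; rw [← hsh, abs_of_neg h]; ring
    · rw [Real.sign_of_pos h] at hsh; rw [← hsh, abs_of_pos h]; ring
  have hs : (0:ℝ) < Real.sqrt |a * b| :=
    Real.sqrt_pos.2 (abs_pos.2 (mul_ne_zero hg' hh'))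
  have hD : (0:ℝ) < |(g₁ t₁ - g₂ t₂) * (h₁ t₁ - h₂ t₂)| :=
    abs_pos.2 (mul_ne_zero hdg hdh)
  have key : A * B
      = (4 * Real.sqrt |a * b| / |(g₁ t₁ - g₂ t₂) * (h₁ t₁ - h₂ t₂)|) ^ 2 := by
    rw [hA, hB, div_pow, mul_pow, Real.sq_sqrt (abs_nonneg _), abs_mul a b,
      abs_mul (g₁ t₁ - g₂ t₂)]
    rw [show (|g₁ t₁ - g₂ t₂| * |h₁ t₁ - h₂ t₂|) ^ 2
        = (g₁ t₁ - g₂ t₂) ^ 2 * (h₁ t₁ - h₂ t₂) ^ 2 by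
      rw [mul_pow, sq_abs, sq_abs]]
    field_simp
  have hsqAB : Real.sqrt (A * B)
      = 4 * Real.sqrt |a * b| / |(g₁ t₁ - g₂ t₂) * (h₁ t₁ - h₂ t₂)| := by
    rw [key, Real.sqrt_sq (by positivity)]
  have hsign : Real.sign K = η := by
    have hpos : 0 < 8 * Real.sqrt |a * b| / |(g₁ t₁ - g₂ t₂) * (h₁ t₁ - h₂ t₂)| :=
      div_pos (by positivity) hD
    rcases hη with h | h
    · subst h
      have ha : 0 < a := by
        rcases lt_or_gt_of_ne hg' with h' | h'
        · rw [Real.sign_of_neg h'] at hsg; norm_num at hsg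
        · exact h'
      have hbpos : 0 < b := by
        rcases lt_or_gt_of_ne hh' with h' | h'
        · rw [Real.sign_of_neg h'] at hsh; norm_num at hsh
        · exact h'
      have : 0 < K := by
        rw [hK, hab]
        exact mul_pos hpos (add_pos (div_pos ha (by positivity))
          (div_pos hbpos (by positivity)))
      exact Real.sign_of_pos this
    · subst h
      have ha : a < 0 := by
        rcases lt_or_gt_of_ne hg' with h' | h'
        · exact h'
        · rw [Real.sign_of_pos h'] at hsg; norm_num at hsg
      have hbneg : b < 0 := by
        rcases lt_or_gt_of_ne hh' with h' | h'
        · exact h'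
        · rw [Real.sign_of_pos h'] at hsh; norm_num at hsh
      have : K < 0 := by
        rw [hK, hab]
        exact mul_neg_of_pos_of_neg hpos (add_neg (div_neg_of_neg_of_pos ha (by positivity))
          (div_neg_of_neg_of_pos hbneg (by positivity)))
      exact Real.sign_of_neg this
  refine ⟨?_, ?_, hsign⟩
  · rw [hK, hab, hsqAB, hA, hB, ← hηa, ← hηb]
    have h1 : abs (η * abs a) = abs a := by
      rcases hη with h | h <;> rw [h] <;> simp [abs_mul]
    have h2 : abs (η * abs b) = abs b := by
      rcases hη with h | h <;> rw [h] <;> simp [abs_mul]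
    rw [h1, h2]
    field_simp
    ring
  · rw [hκ, hab, hsqAB, hA, hB, ← hηa, ← hηb]
    have h1 : abs (η * abs a) = abs a := by
      rcases hη with h | h <;> rw [h] <;> simp [abs_mul]
    have h2 : abs (η * abs b) = abs b := by
      rcases hη with h | h <;> rw [h] <;> simp [abs_mul]
    rw [h1, h2]
    field_simp
    ring
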